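/- Suppose λ ∈ ℂ with Re λ > λ*(a) := max_{0≤r≤R_s} a(r). Then for every h ∈ C([0,R_s];ℂ), the unique solution φ_λ ∈ C([0,R_s];ℂ) ∩ C¹((0,R_s);ℂ) of λφ − L₀φ = h on (0,R_s) satisfies max_{0≤r≤R_s}|φ_λ(r)| ≤ (Re λ − λ*(a))^{−1} max_{0≤r≤R_s}|h(r)|. (Lemma 4.1, assertion (3), estimate (4.6).) -/

import Mathlib

open Set Real

set_option maxHeartbeats 1000000 in
/-- Lemma 4.1, assertion (3), estimate (4.6): if `Re λ > λ*(a) = max_{[0,R_s]} a`, the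
(unique) solution `φ_λ ∈ C([0,R_s]) ∩ C¹((0,R_s))` of `λφ − L₀φ = h` satisfies
`max |φ_λ| ≤ (Re λ − λ*(a))⁻¹ max |h|`. -/
theorem stmt_8
    (Rs c₁ c₂ : ℝ) (hRs : 0 < Rs) (hc₂ : 0 < c₂) (hc₁₂ : c₂ ≤ c₁)
    (vs vs' : ℝ → ℝ)
    (hvs : ∀ r ∈ Icc (0:ℝ) Rs, HasDerivAt vs (vs' r) r)
    (hvs'cont : ContinuousOn vs' (Icc 0 Rs))
    (hvs0 : vs 0 = 0) (hvsRs : vs Rs = 0)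
    (hvsb : ∀ r ∈ Icc (0:ℝ) Rs, -c₁ * r * (Rs - r) ≤ vs r ∧ vs r ≤ -c₂ * r * (Rs - r))
    (a : ℝ → ℝ) (hacont : ContinuousOn a (Icc 0 Rs))
    (lamStar : ℝ) (hlamStar : IsGreatest (a '' Icc (0:ℝ) Rs) lamStar)
    (lam : ℂ) (hlam : lamStar < lam.re)
    (h : ℝ → ℂ) (hhcont : ContinuousOn h (Icc 0 Rs))
    (φ φ' : ℝ → ℂ)
    (hφcont : ContinuousOn φ (Icc 0 Rs))
    (hφ' : ∀ r ∈ Ioo (0:ℝ) Rs, HasDerivAt φ (φ' r) r)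
    (heq : ∀ r ∈ Ioo (0:ℝ) Rs,
      lam * φ r - (-(vs r : ℂ) * φ' r + (a r : ℂ) * φ r) = h r) :
    ∀ M : ℝ, (∀ r ∈ Icc (0:ℝ) Rs, ‖h r‖ ≤ M) →
      ∀ r ∈ Icc (0:ℝ) Rs, ‖φ r‖ ≤ (lam.re - lamStar)⁻¹ * M := by
  intro M hM
  have h0mem : (0:ℝ) ∈ Icc (0:ℝ) Rs := ⟨le_refl _, hRs.le⟩
  have hM0 : 0 ≤ M := le_trans (norm_nonneg _) (hM 0 h0mem)
  set β : ℝ := lam.re - lamStar with hβdef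
  have hβ : 0 < β := sub_pos.mpr hlam
  obtain ⟨r₀, hr₀mem, hr₀max⟩ :=
    isCompact_Icc.exists_isMaxOn (nonempty_Icc.mpr hRs.le) hφcont.norm
  set m : ℝ := ‖φ r₀‖ with hmdef
  have hmmax : ∀ r ∈ Icc (0:ℝ) Rs, ‖φ r‖ ≤ m := fun r hr => hr₀max hr
  have hm0 : 0 ≤ m := norm_nonneg _
  suffices hkey : m ≤ β⁻¹ * M by
    intro r hr; exact le_trans (hmmax r hr) hkey
  by_contra hcon
  push_neg at hcon
  have hMlt : M < β * m := by
    have h1 : β * (β⁻¹ * M) < β * m := mul_lt_mul_of_pos_left hcon hβ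
    rwa [← mul_assoc, mul_inv_cancel₀ (ne_of_gt hβ), one_mul] at h1
  have hmpos : 0 < m := by nlinarith
  have hc₁pos : 0 < c₁ := lt_of_lt_of_le hc₂ hc₁₂
  -- the squared modulus
  set g : ℝ → ℝ := fun r => ‖φ r‖ ^ 2 with hgdef
  have hgeq : ∀ r, g r = (φ r).re ^ 2 + (φ r).im ^ 2 := by
    intro r
    simp only [hgdef, Complex.sq_norm, Complex.normSq_apply]
    ring
  have hgcont : ContinuousOn g (Icc (0:ℝ) Rs) := hφcont.norm.pow 2
  have hgle : ∀ r ∈ Icc (0:ℝ) Rs, g r ≤ m ^ 2 := by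
    intro r hr
    simp only [hgdef]
    exact pow_le_pow_left₀ (norm_nonneg _) (hmmax r hr) 2
  have hgnn : ∀ r, 0 ≤ g r := fun r => by simp only [hgdef]; positivity
  -- constants
  have hnum : 0 < β * m ^ 2 - m * M := by nlinarith
  set η : ℝ := (β * m ^ 2 - m * M) / (2 * β) with hηdef
  set ε₀ : ℝ := (β * m ^ 2 - m * M) / 2 with hε₀def
  have hη : 0 < η := div_pos hnum (by linarith)
  have hε₀ : 0 < ε₀ := div_pos hnum (by norm_num)
  have hmη : 0 ≤ m ^ 2 - η := by
    rw [hηdef]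
    rw [sub_nonneg, div_le_iff₀ (by linarith : (0:ℝ) < 2 * β)]
    nlinarith
  have hβη : β * (m ^ 2 - η) = ε₀ + m * M := by
    rw [hηdef, hε₀def]; field_simp; ring
  -- derivative of g
  have hgd : ∀ s ∈ Ioo (0:ℝ) Rs,
      HasDerivAt g (2 * ((φ s).re * (φ' s).re + (φ s).im * (φ' s).im)) s := by
    intro s hs
    have hd := hφ' s hs
    have hre : HasDerivAt (fun r => (φ r).re) (φ' s).re s :=
      Complex.reCLM.hasFDerivAt.comp_hasDerivAt s hd
    have him : HasDerivAt (fun r => (φ r).im) (φ' s).im s :=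
      Complex.imCLM.hasFDerivAt.comp_hasDerivAt s hd
    have h2 : HasDerivAt (fun r => (φ r).re ^ 2 + (φ r).im ^ 2)
        (2 * ((φ s).re * (φ' s).re + (φ s).im * (φ' s).im)) s := by
      have h3 := (hre.mul hre).add (him.mul him)
      have h4 : (fun r => (φ r).re ^ 2 + (φ r).im ^ 2) = ((fun r => (φ r).re) * fun r => (φ r).re) + (fun r => (φ r).im) * fun r => (φ r).im := by
        funext r; simp only [Pi.add_apply, Pi.mul_apply]; ring
      rw [h4]; exact h3.congr_deriv (by ring)
    have hfun : g = fun r => (φ r).re ^ 2 + (φ r).im ^ 2 := funext hgeq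
    rw [hfun]; exact h2
  -- the key pointwise derivative lower bound
  have hstep : ∀ s ∈ Ioo (0:ℝ) Rs, m ^ 2 - η ≤ g s →
      2 * ε₀ / (c₁ * s * (Rs - s)) ≤
        2 * ((φ s).re * (φ' s).re + (φ s).im * (φ' s).im) := by
    intro s hs hgs
    have hsIcc : s ∈ Icc (0:ℝ) Rs := ⟨hs.1.le, hs.2.le⟩
    have hs0 : 0 < s := hs.1
    have hsR : 0 < Rs - s := sub_pos.mpr hs.2
    have hden : 0 < c₁ * s * (Rs - s) := by positivity
    have hvsub := hvsb s hsIcc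
    have hvsneg : vs s < 0 := by nlinarith [hvsub.2]
    have hvslb : -(c₁ * s * (Rs - s)) ≤ vs s := by nlinarith [hvsub.1]
    have E : (vs s : ℂ) * φ' s = h s - lam * φ s + (a s : ℂ) * φ s := by
      linear_combination heq s hs
    obtain ⟨Ere, Eim⟩ := Complex.ext_iff.mp E
    simp only [Complex.mul_re, Complex.mul_im, Complex.add_re, Complex.add_im,
      Complex.sub_re, Complex.sub_im, Complex.ofReal_re, Complex.ofReal_im,
      zero_mul, mul_zero, sub_zero, zero_sub, add_zero, zero_add] at Ere Eim
    set u := (φ s).re with hu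
    set w := (φ s).im with hw
    have hid : vs s * (u * (φ' s).re + w * (φ' s).im) =
        (u * (h s).re + w * (h s).im) - (lam.re - a s) * (u ^ 2 + w ^ 2) := by
      linear_combination u * Ere + w * Eim
    have hgs' : g s = u ^ 2 + w ^ 2 := hgeq s
    have hφle : u ^ 2 + w ^ 2 ≤ m ^ 2 := by rw [← hgs']; exact hgle s hsIcc
    have hhle : (h s).re ^ 2 + (h s).im ^ 2 ≤ M ^ 2 := by
      have h1 : ‖h s‖ ≤ M := hM s hsIcc
      have h2 : ‖h s‖ ^ 2 ≤ M ^ 2 := pow_le_pow_left₀ (norm_nonneg _) h1 2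
      have h3 : ‖h s‖ ^ 2 = (h s).re ^ 2 + (h s).im ^ 2 := by
        simp only [Complex.sq_norm, Complex.normSq_apply]; ring
      linarith [h3 ▸ h2]
    have hP : u * (h s).re + w * (h s).im ≤ m * M := by
      have hcs : (u * (h s).re + w * (h s).im) ^ 2 ≤
          (u ^ 2 + w ^ 2) * ((h s).re ^ 2 + (h s).im ^ 2) := by
        nlinarith [sq_nonneg (u * (h s).im - w * (h s).re)]
      have h4 : (u ^ 2 + w ^ 2) * ((h s).re ^ 2 + (h s).im ^ 2) ≤ m ^ 2 * M ^ 2 := by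
        apply mul_le_mul hφle hhle (by positivity) (by positivity)
      nlinarith [mul_nonneg hm0 hM0]
    have ha_le : a s ≤ lamStar := hlamStar.2 ⟨s, hsIcc, rfl⟩
    have hgs2 : m ^ 2 - η ≤ u ^ 2 + w ^ 2 := by rw [← hgs']; exact hgs
    have hmain : vs s * (u * (φ' s).re + w * (φ' s).im) ≤ -ε₀ := by
      have h5 : β * (m ^ 2 - η) ≤ (lam.re - a s) * (u ^ 2 + w ^ 2) := by
        apply mul_le_mul (by rw [hβdef]; linarith) hgs2 hmη (by linarith)
      rw [hid]
      linarith [hβη, hP]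
    have hX : ε₀ / (-vs s) ≤ u * (φ' s).re + w * (φ' s).im := by
      rw [div_le_iff₀ (by linarith : (0:ℝ) < -vs s)]
      nlinarith
    have hchain : ε₀ / (c₁ * s * (Rs - s)) ≤ ε₀ / (-vs s) := by
      gcongr
      · linarith
      · linarith
    calc 2 * ε₀ / (c₁ * s * (Rs - s)) = 2 * (ε₀ / (c₁ * s * (Rs - s))) := by ring
      _ ≤ 2 * (ε₀ / (-vs s)) := by linarith
      _ ≤ 2 * (u * (φ' s).re + w * (φ' s).im) := by linarith
  -- the set of maximizers and its supremum
  set A : Set ℝ := {r | r ∈ Icc (0:ℝ) Rs ∧ ‖φ r‖ = m} with hAdef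
  have hAsub : A ⊆ Icc 0 Rs := fun r hr => hr.1
  have hAclosed : IsClosed A := by
    have hAeq : A = Icc (0:ℝ) Rs ∩ (fun r => ‖φ r‖) ⁻¹' {m} := by
      ext r; simp [hAdef]
    rw [hAeq]
    exact hφcont.norm.preimage_isClosed_of_isClosed isClosed_Icc isClosed_singleton
  have hAcpt : IsCompact A := isCompact_Icc.of_isClosed_subset hAclosed hAsub
  have hAne : A.Nonempty := ⟨r₀, hr₀mem, rfl⟩
  set rstar := sSup A with hrdef
  have hrA : rstar ∈ A := hAcpt.sSup_mem hAne
  have hrmem : rstar ∈ Icc (0:ℝ) Rs := hrA.1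
  have hgr : g rstar = m ^ 2 := by simp only [hgdef]; rw [hrA.2]
  -- neighborhoods where g is close to its maximum
  have hnear : ∀ p ∈ Icc (0:ℝ) Rs, g p = m ^ 2 →
      ∃ δ > 0, ∀ s ∈ Icc (0:ℝ) Rs, dist s p < δ → m ^ 2 - η < g s := by
    intro p hp hgp
    have hc : ContinuousWithinAt g (Icc 0 Rs) p := hgcont p hp
    have hev : ∀ᶠ s in nhdsWithin p (Icc (0:ℝ) Rs), m ^ 2 - η < g s :=
      hc.eventually (eventually_gt_nhds (by rw [hgp]; linarith))
    rw [Filter.eventually_iff, Metric.mem_nhdsWithin_iff] at hev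
    obtain ⟨δ, hδ, hst⟩ := hev
    exact ⟨δ, hδ, fun s hs hd => hst ⟨Metric.mem_ball.mpr hd, hs⟩⟩
  -- the maximum is attained at Rs
  have hrstar : rstar = Rs := by
    by_contra hne
    have hlt : rstar < Rs := lt_of_le_of_ne hrmem.2 hne
    obtain ⟨δ, hδ, hball⟩ := hnear rstar hrmem hgr
    set t := min (rstar + δ / 2) ((rstar + Rs) / 2) with htdef
    have ht1 : rstar < t := lt_min (by linarith) (by linarith)
    have ht2 : t < Rs := lt_of_le_of_lt (min_le_right _ _) (by linarith)
    have ht0 : 0 ≤ rstar := hrmem.1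
    have htsub : Icc rstar t ⊆ Icc (0:ℝ) Rs := fun x hx =>
      ⟨le_trans ht0 hx.1, le_trans hx.2 ht2.le⟩
    have hmono : StrictMonoOn g (Icc rstar t) := by
      apply strictMonoOn_of_deriv_pos (convex_Icc _ _) (hgcont.mono htsub)
      intro x hx
      rw [interior_Icc] at hx
      have hxI : x ∈ Ioo (0:ℝ) Rs := ⟨lt_of_le_of_lt ht0 hx.1, lt_trans hx.2 ht2⟩
      have hxg : m ^ 2 - η < g x := by
        apply hball x ⟨hxI.1.le, hxI.2.le⟩
        rw [Real.dist_eq, abs_of_pos (by linarith [hx.1] : (0:ℝ) < x - rstar)]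
        have h6 : t ≤ rstar + δ / 2 := min_le_left _ _
        linarith [hx.2]
      rw [(hgd x hxI).deriv]
      have h7 := hstep x hxI hxg.le
      have hpos : 0 < 2 * ε₀ / (c₁ * x * (Rs - x)) := by
        apply div_pos (by linarith)
        have := hxI.1
        have := sub_pos.mpr hxI.2
        positivity
      linarith
    have hgt : g rstar < g t :=
      hmono ⟨le_refl _, ht1.le⟩ ⟨ht1.le, le_refl _⟩ ht1
    have hle : g t ≤ m ^ 2 := hgle t (htsub ⟨ht1.le, le_refl _⟩)
    linarith [hgr]
  rw [hrstar] at hgr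
  -- now derive a contradiction from the blow-up near Rs
  have hRsmem : Rs ∈ Icc (0:ℝ) Rs := ⟨hRs.le, le_refl _⟩
  obtain ⟨δ, hδ, hball⟩ := hnear Rs hRsmem hgr
  set r₁ := max (Rs - δ / 2) (Rs / 2) with hr₁def
  have hr₁0 : 0 < r₁ := lt_of_lt_of_le (by linarith) (le_max_right _ _)
  have hr₁Rs : r₁ < Rs := max_lt (by linarith) (by linarith)
  have hball' : ∀ s ∈ Icc r₁ Rs, m ^ 2 - η < g s := by
    intro s hs
    apply hball s ⟨le_trans hr₁0.le hs.1, hs.2⟩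
    rw [Real.dist_eq, abs_of_nonpos (by linarith [hs.2])]
    have h6 : Rs - δ / 2 ≤ r₁ := le_max_left _ _
    linarith [hs.1]
  set K := 2 * ε₀ / (c₁ * Rs) with hKdef
  have hK : 0 < K := div_pos (by linarith) (by positivity)
  set ε₁ := Real.exp (Real.log (Rs - r₁) - (m ^ 2 + 1) / K) with hε₁def
  set εr := min ((Rs - r₁) / 2) ε₁ with hεrdef
  have hεr0 : 0 < εr := lt_min (by linarith) (Real.exp_pos _)
  have hεrlt : εr < Rs - r₁ := lt_of_le_of_lt (min_le_left _ _) (by linarith)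
  set R := Rs - εr with hRdef
  have hr₁R : r₁ < R := by rw [hRdef]; linarith
  have hRRs : R < Rs := by rw [hRdef]; linarith
  have hFderiv : ∀ x ∈ Ioo r₁ R, HasDerivAt (fun r => g r + K * Real.log (Rs - r))
      (2 * ((φ x).re * (φ' x).re + (φ x).im * (φ' x).im) + K * ((Rs - x)⁻¹ * (0 - 1))) x := by
    intro x hx
    have hxI : x ∈ Ioo (0:ℝ) Rs := ⟨lt_trans hr₁0 hx.1, lt_trans hx.2 hRRs⟩
    have hRx : 0 < Rs - x := sub_pos.mpr hxI.2
    have hsub : HasDerivAt (fun r : ℝ => Rs - r) (0 - 1) x :=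
      (hasDerivAt_const x Rs).sub (hasDerivAt_id x)
    have hlog : HasDerivAt (fun r => Real.log (Rs - r)) ((Rs - x)⁻¹ * (0 - 1)) x :=
      (Real.hasDerivAt_log (ne_of_gt hRx)).comp x hsub
    exact (hgd x hxI).add (hlog.const_mul K)
  have hFmono : MonotoneOn (fun r => g r + K * Real.log (Rs - r)) (Icc r₁ R) := by
    apply monotoneOn_of_deriv_nonneg (convex_Icc _ _)
    · apply ContinuousOn.add
        (hgcont.mono (fun x hx => ⟨le_trans hr₁0.le hx.1, le_trans hx.2 hRRs.le⟩))
      apply ContinuousOn.mul continuousOn_const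
      apply ContinuousOn.log (continuousOn_const.sub continuousOn_id)
      intro x hx
      have hxR : x ≤ R := hx.2
      have : 0 < Rs - x := by rw [hRdef] at hxR; linarith
      exact ne_of_gt this
    · intro x hx
      rw [interior_Icc] at hx
      exact (hFderiv x hx).differentiableAt.differentiableWithinAt
    · intro x hx
      rw [interior_Icc] at hx
      rw [(hFderiv x hx).deriv]
      have hxI : x ∈ Ioo (0:ℝ) Rs := ⟨lt_trans hr₁0 hx.1, lt_trans hx.2 hRRs⟩
      have hgx := hball' x ⟨hx.1.le, le_trans hx.2.le hRRs.le⟩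
      have h7 := hstep x hxI hgx.le
      have hxpos : 0 < x := hxI.1
      have hRx : 0 < Rs - x := sub_pos.mpr hxI.2
      have h8 : 2 * ε₀ / (c₁ * Rs * (Rs - x)) ≤ 2 * ε₀ / (c₁ * x * (Rs - x)) := by
        apply div_le_div_of_nonneg_left (by linarith) (by positivity)
        nlinarith [mul_nonneg (mul_nonneg hc₁pos.le hRx.le) hRx.le]
      have h9 : K * (Rs - x)⁻¹ = 2 * ε₀ / (c₁ * Rs * (Rs - x)) := by
        rw [hKdef]; field_simp
      have h10 : K * ((Rs - x)⁻¹ * (0 - 1)) = -(K * (Rs - x)⁻¹) := by ring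
      linarith [h7, h8, h9.le, h9.ge, h10.le, h10.ge]
  have hFle : g r₁ + K * Real.log (Rs - r₁) ≤ g R + K * Real.log (Rs - R) :=
    hFmono ⟨le_refl _, hr₁R.le⟩ ⟨hr₁R.le, le_refl _⟩ hr₁R.le
  have hgR : g R ≤ m ^ 2 := hgle R ⟨by linarith, hRRs.le⟩
  have hgr₁ : 0 ≤ g r₁ := hgnn r₁
  have hlogR : Real.log (Rs - R) ≤ Real.log (Rs - r₁) - (m ^ 2 + 1) / K := by
    have h11 : Rs - R = εr := by rw [hRdef]; ring
    rw [h11]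
    calc Real.log εr ≤ Real.log ε₁ := Real.log_le_log hεr0 (min_le_right _ _)
      _ = Real.log (Rs - r₁) - (m ^ 2 + 1) / K := by rw [hε₁def, Real.log_exp]
  have h12 : K * Real.log (Rs - R) ≤ K * Real.log (Rs - r₁) - (m ^ 2 + 1) := by
    have h13 := mul_le_mul_of_nonneg_left hlogR hK.le
    have h14 : K * (Real.log (Rs - r₁) - (m ^ 2 + 1) / K) =
        K * Real.log (Rs - r₁) - (m ^ 2 + 1) := by
      field_simp
    linarith [h13, h14.le, h14.ge]
  linarith [hFle, hgR, hgr₁, h12]
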